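/- arXiv:1303.6721 — 5 statements merged into one kernel-verified Lean document; each statement's English description precedes it below -/
import Mathlib

section
/- For every nonnegative integer k there exists a constant c_k > 0 such that |d^k/dξ^k m(ξ)| ≤ c_k (1+|ξ|)^{-1/2-k} for all ξ ∈ ℝ, i.e., the Whitham symbol m(ξ) = sqrt(tanh(ξ)/ξ) belongs to the symbol class S^{-1/2}(ℝ). -/
open Real Set Filter Topology

noncomputable def whithamSymbol (ξ : ℝ) : ℝ :=
  if ξ = 0 then 1 else Real.sqrt (Real.tanh ξ / ξ)


-- tanh basics
lemma tanh_fun_eq : Real.tanh = fun x => Real.sinh x / Real.cosh x :=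
  funext fun x => Real.tanh_eq_sinh_div_cosh x

lemma contDiff_tanh {n : WithTop ℕ∞} : ContDiff ℝ n Real.tanh := by
  rw [tanh_fun_eq]
  exact Real.contDiff_sinh.div Real.contDiff_cosh fun x => (Real.cosh_pos x).ne'

lemma one_sub_tanh_sq (x : ℝ) : 1 - Real.tanh x ^ 2 = (Real.cosh x ^ 2)⁻¹ := by
  rw [Real.tanh_eq_sinh_div_cosh, div_pow]
  have h := Real.cosh_sq_sub_sinh_sq x
  have hc : Real.cosh x ^ 2 ≠ 0 := by positivity
  field_simp
  exact h

lemma tanh_hasDerivAt (x : ℝ) : HasDerivAt Real.tanh (1 - Real.tanh x ^ 2) x := by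
  have h : HasDerivAt (fun y => Real.sinh y / Real.cosh y)
      ((Real.cosh x * Real.cosh x - Real.sinh x * Real.sinh x) / Real.cosh x ^ 2) x :=
    (Real.hasDerivAt_sinh x).div (Real.hasDerivAt_cosh x) (Real.cosh_pos x).ne'
  rw [← tanh_fun_eq] at h
  convert h using 1
  rw [one_sub_tanh_sq]
  have h2 := Real.cosh_sq_sub_sinh_sq x
  rw [inv_eq_one_div]
  congr 1
  ring_nf
  nlinarith [h2]

lemma tanh_strictMono : StrictMono Real.tanh := by
  apply strictMono_of_deriv_pos
  intro x
  rw [(tanh_hasDerivAt x).deriv, one_sub_tanh_sq]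
  positivity

lemma tanh_lt_one (x : ℝ) : Real.tanh x < 1 := by
  rw [Real.tanh_eq_sinh_div_cosh, div_lt_one (Real.cosh_pos x)]
  exact Real.sinh_lt_cosh x

lemma tanh_pos {x : ℝ} (hx : 0 < x) : 0 < Real.tanh x := by
  have := tanh_strictMono hx
  rwa [Real.tanh_zero] at this

lemma abs_tanh_le_one (x : ℝ) : |Real.tanh x| ≤ 1 := by
  rw [abs_le]
  constructor
  · have := _root_.tanh_lt_one (-x)
    rw [Real.tanh_neg] at this
    linarith
  · exact (_root_.tanh_lt_one x).le

lemma one_sub_tanh_sq_le {x : ℝ} (hx : 0 ≤ x) :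
    1 - Real.tanh x ^ 2 ≤ 4 * Real.exp (-(2 * x)) := by
  rw [one_sub_tanh_sq]
  have hc : Real.exp x / 2 ≤ Real.cosh x := by
    rw [Real.cosh_eq]
    have := Real.exp_pos (-x)
    linarith
  have hc2 : (Real.exp x / 2) ^ 2 ≤ Real.cosh x ^ 2 := by
    apply pow_le_pow_left₀ (by positivity) hc
  have h4 : (Real.exp x / 2) ^ 2 = Real.exp (2 * x) / 4 := by
    rw [div_pow, two_mul, Real.exp_add]
    norm_num
    ring
  calc (Real.cosh x ^ 2)⁻¹ ≤ ((Real.exp x / 2) ^ 2)⁻¹ := by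
        apply inv_anti₀ (by positivity) hc2
    _ = 4 * Real.exp (-(2 * x)) := by
        rw [h4, Real.exp_neg]
        field_simp

noncomputable def tanhPoly : ℕ → Polynomial ℝ
  | 0 => Polynomial.X
  | n + 1 => (tanhPoly n).derivative * (1 - Polynomial.X ^ 2)

lemma iteratedDeriv_tanh_eq (n : ℕ) :
    iteratedDeriv n Real.tanh = fun x => (tanhPoly n).eval (Real.tanh x) := by
  induction n with
  | zero => simp [tanhPoly, iteratedDeriv_zero]
  | succ n ih =>
    funext x
    rw [iteratedDeriv_succ, ih]
    have h : HasDerivAt (fun y => (tanhPoly n).eval (Real.tanh y))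
        ((tanhPoly n).derivative.eval (Real.tanh x) * (1 - Real.tanh x ^ 2)) x :=
      (Polynomial.hasDerivAt (tanhPoly n) (Real.tanh x)).comp x (tanh_hasDerivAt x)
    rw [h.deriv, tanhPoly]
    simp [Polynomial.eval_mul]

lemma poly_eval_abs_le (P : Polynomial ℝ) {y : ℝ} (hy : |y| ≤ 1) :
    |P.eval y| ≤ ∑ i ∈ Finset.range (P.natDegree + 1), |P.coeff i| := by
  rw [Polynomial.eval_eq_sum_range]
  refine (Finset.abs_sum_le_sum_abs _ _).trans ?_
  apply Finset.sum_le_sum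
  intro i _
  rw [abs_mul, abs_pow]
  calc |P.coeff i| * |y| ^ i ≤ |P.coeff i| * 1 := by
        apply mul_le_mul_of_nonneg_left _ (abs_nonneg _)
        exact pow_le_one₀ (abs_nonneg _) hy
    _ = |P.coeff i| := mul_one _

/-- exponential decay of tanh derivatives -/
lemma tanh_iteratedDeriv_decay (n : ℕ) (hn : 1 ≤ n) :
    ∃ C : ℝ, 0 < C ∧ ∀ x : ℝ, 0 ≤ x →
      |iteratedDeriv n Real.tanh x| ≤ C * Real.exp (-(2 * x)) := by
  obtain ⟨m, rfl⟩ := Nat.exists_eq_add_of_le hn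
  set Q := (tanhPoly m).derivative
  refine ⟨4 * (∑ i ∈ Finset.range (Q.natDegree + 1), |Q.coeff i|) + 4, by positivity, ?_⟩
  intro x hx
  have h1 : iteratedDeriv (1 + m) Real.tanh x = Q.eval (Real.tanh x) * (1 - Real.tanh x ^ 2) := by
    rw [add_comm 1 m, iteratedDeriv_tanh_eq]
    show ((tanhPoly (m+1)).eval (Real.tanh x)) = _
    rw [tanhPoly]
    simp [Polynomial.eval_mul]
    left; rfl
  rw [h1, abs_mul]
  have h2 : |Q.eval (Real.tanh x)| ≤ ∑ i ∈ Finset.range (Q.natDegree + 1), |Q.coeff i| :=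
    poly_eval_abs_le Q (abs_tanh_le_one x)
  have h3 : |1 - Real.tanh x ^ 2| ≤ 4 * Real.exp (-(2 * x)) := by
    rw [abs_of_nonneg (by rw [one_sub_tanh_sq]; positivity)]
    exact one_sub_tanh_sq_le hx
  calc |Q.eval (Real.tanh x)| * |1 - Real.tanh x ^ 2|
      ≤ (∑ i ∈ Finset.range (Q.natDegree + 1), |Q.coeff i|) * (4 * Real.exp (-(2 * x))) := by
        apply mul_le_mul h2 h3 (abs_nonneg _)
        positivity
    _ ≤ (4 * (∑ i ∈ Finset.range (Q.natDegree + 1), |Q.coeff i|) + 4) * Real.exp (-(2 * x)) := by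
        have := Real.exp_pos (-(2 * x))
        nlinarith [Finset.sum_nonneg (fun i (_ : i ∈ Finset.range (Q.natDegree + 1)) => abs_nonneg (Q.coeff i))]

lemma iteratedDeriv_rpow_const (p : ℝ) (n : ℕ) :
    ∀ x : ℝ, 0 < x → iteratedDeriv n (fun y : ℝ => y ^ p) x =
      (∏ i ∈ Finset.range n, (p - i)) * x ^ (p - n) := by
  induction n with
  | zero => intro x _; simp
  | succ n ih =>
    intro x hx
    rw [iteratedDeriv_succ]
    have hev : iteratedDeriv n (fun y : ℝ => y ^ p) =ᶠ[𝓝 x]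
        fun y => (∏ i ∈ Finset.range n, (p - i)) * y ^ (p - n) := by
      filter_upwards [isOpen_Ioi.mem_nhds (show x ∈ Set.Ioi (0:ℝ) from hx)] with y hy
      exact ih y hy
    rw [hev.deriv_eq]
    have h : HasDerivAt (fun y : ℝ => (∏ i ∈ Finset.range n, (p - i)) * y ^ (p - n))
        ((∏ i ∈ Finset.range n, (p - i)) * ((p - n) * x ^ (p - n - 1))) x :=
      (Real.hasDerivAt_rpow_const (Or.inl hx.ne')).const_mul _
    rw [h.deriv, Finset.prod_range_succ]
    push_cast
    rw [show p - (n + 1) = p - n - 1 by ring]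
    ring

lemma sqrt_fun_eq : Real.sqrt = fun y : ℝ => y ^ (1/2 : ℝ) :=
  funext fun y => Real.sqrt_eq_rpow y

/-- bound for a single order of derivative of sqrt on Ioo a 1 -/
lemma sqrt_iteratedDeriv_bound {a : ℝ} (ha : 0 < a) (ha1 : a < 1) (i : ℕ) :
    ∃ C : ℝ, 0 < C ∧ ∀ y ∈ Set.Ioo a 1, |iteratedDeriv i Real.sqrt y| ≤ C := by
  refine ⟨|∏ j ∈ Finset.range i, ((1:ℝ)/2 - j)| * max 1 (a ^ ((1:ℝ)/2 - i)) + 1, by positivity, ?_⟩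
  intro y hy
  have hy0 : 0 < y := lt_trans ha hy.1
  rw [sqrt_fun_eq, iteratedDeriv_rpow_const _ _ y hy0, abs_mul]
  have hyp : |y ^ ((1:ℝ)/2 - i)| = y ^ ((1:ℝ)/2 - i) := abs_of_nonneg (Real.rpow_nonneg hy0.le _)
  rw [hyp]
  have hbound : y ^ ((1:ℝ)/2 - i) ≤ max 1 (a ^ ((1:ℝ)/2 - i)) := by
    rcases le_or_gt ((1:ℝ)/2 - i) 0 with h | h
    · exact le_max_of_le_right (Real.rpow_le_rpow_of_nonpos ha hy.1.le h)
    · apply le_max_of_le_left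
      calc y ^ ((1:ℝ)/2 - i) ≤ 1 ^ ((1:ℝ)/2 - i) :=
            Real.rpow_le_rpow hy0.le hy.2.le h.le
        _ = 1 := Real.one_rpow _
  nlinarith [abs_nonneg (∏ j ∈ Finset.range i, ((1:ℝ)/2 - j)),
    Real.rpow_nonneg hy0.le ((1:ℝ)/2 - (i:ℝ)),
    mul_le_mul_of_nonneg_left hbound (abs_nonneg (∏ j ∈ Finset.range i, ((1:ℝ)/2 - j)))]

/-- uniform over i ≤ k -/
lemma sqrt_iteratedDeriv_bound_unif {a : ℝ} (ha : 0 < a) (ha1 : a < 1) (k : ℕ) :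
    ∃ C : ℝ, 0 < C ∧ ∀ i ≤ k, ∀ y ∈ Set.Ioo a 1, |iteratedDeriv i Real.sqrt y| ≤ C := by
  choose C hCpos hC using sqrt_iteratedDeriv_bound ha ha1
  refine ⟨(Finset.range (k+1)).sup' (by simp) C, ?_, ?_⟩
  · exact lt_of_lt_of_le (hCpos 0) (Finset.le_sup' C (by simp))
  · intro i hi y hy
    exact (hC i y hy).trans (Finset.le_sup' C (Finset.mem_range.mpr (Nat.lt_succ_of_le hi)))

noncomputable def whithamQ (ξ : ℝ) : ℝ := if ξ = 0 then 1 else Real.tanh ξ / ξ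

lemma analyticAt_sinh (x : ℝ) : AnalyticAt ℝ Real.sinh x := by
  have h : Real.sinh = fun y => (1/2 : ℝ) * (Real.exp y - Real.exp (-y)) := by
    funext y; rw [Real.sinh_eq]; ring
  rw [h]
  exact analyticAt_const.mul ((analyticAt_rexp).sub (analyticAt_rexp.comp (analyticAt_id.neg)))

lemma analyticAt_cosh (x : ℝ) : AnalyticAt ℝ Real.cosh x := by
  have h : Real.cosh = fun y => (1/2 : ℝ) * (Real.exp y + Real.exp (-y)) := by
    funext y; rw [Real.cosh_eq]; ring
  rw [h]
  exact analyticAt_const.mul ((analyticAt_rexp).add (analyticAt_rexp.comp (analyticAt_id.neg)))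

lemma analyticAt_tanh (x : ℝ) : AnalyticAt ℝ Real.tanh x := by
  rw [tanh_fun_eq]
  exact (analyticAt_sinh x).div (analyticAt_cosh x) (Real.cosh_pos x).ne'

lemma tanh_neg' {x : ℝ} (hx : x < 0) : Real.tanh x < 0 := by
  have := tanh_strictMono hx
  rwa [Real.tanh_zero] at this

lemma whithamQ_pos (ξ : ℝ) : 0 < whithamQ ξ := by
  unfold whithamQ
  rcases eq_or_ne ξ 0 with rfl | h
  · simp
  · rw [if_neg h]
    rcases h.lt_or_gt with hlt | hgt
    · exact div_pos_of_neg_of_neg (tanh_neg' hlt) hlt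
    · exact div_pos (tanh_pos hgt) hgt

lemma tendsto_whithamQ : Tendsto (fun ξ : ℝ => Real.tanh ξ / ξ) (𝓝[≠] (0:ℝ)) (𝓝 1) := by
  have h := tanh_hasDerivAt 0
  rw [hasDerivAt_iff_tendsto_slope] at h
  simp only [Real.tanh_zero, one_pow, sub_zero] at h
  have : (slope Real.tanh 0) = fun ξ : ℝ => Real.tanh ξ / ξ := by
    funext ξ
    rw [slope_def_field, Real.tanh_zero]
    simp [div_eq_mul_inv]
  rw [this] at h
  convert h using 2
  norm_num

lemma contDiffAt_whithamQ_zero {n : WithTop ℕ∞} : ContDiffAt ℝ n whithamQ 0 := by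
  have h0 : AnalyticAt ℝ Real.tanh 0 := analyticAt_tanh 0
  have hne : ¬ ∀ᶠ z in 𝓝 (0:ℝ), Real.tanh z = 0 := by
    intro h
    rw [Metric.eventually_nhds_iff] at h
    obtain ⟨ε, hε, hball⟩ := h
    have h1 : dist (ε/2) (0:ℝ) < ε := by
      rw [Real.dist_eq, sub_zero, abs_of_pos (by linarith)]
      linarith
    exact absurd (hball h1) (ne_of_gt (tanh_pos (by linarith)))
  obtain ⟨n0, g, hg, hg0, hfg⟩ := h0.exists_eventuallyEq_pow_smul_nonzero_iff.mpr hne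
  simp only [sub_zero, smul_eq_mul] at hfg
  -- n0 = m + 1
  obtain ⟨m, rfl⟩ : ∃ m, n0 = m + 1 := by
    rcases n0 with _ | m
    · exfalso
      have := hfg.self_of_nhds
      simp only [Real.tanh_zero, pow_zero, one_mul] at this
      exact hg0 this.symm
    · exact ⟨m, rfl⟩
  set h : ℝ → ℝ := fun z => z ^ m * g z with hh_def
  have hh : AnalyticAt ℝ h 0 := (analyticAt_id.pow m).mul hg
  have heq' : ∀ᶠ z in 𝓝[≠] (0:ℝ), whithamQ z = h z := by
    rw [eventually_nhdsWithin_iff]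
    filter_upwards [hfg] with z hz hz0
    have hz0' : z ≠ 0 := hz0
    rw [whithamQ, if_neg hz0', hz, hh_def]
    field_simp
    ring
  have hqq : ∀ᶠ z in 𝓝[≠] (0:ℝ), Real.tanh z / z = whithamQ z := by
    filter_upwards [self_mem_nhdsWithin] with z hz
    have hz0' : z ≠ 0 := hz
    rw [whithamQ, if_neg hz0']
  have hlim : Tendsto whithamQ (𝓝[≠] (0:ℝ)) (𝓝 1) := Tendsto.congr' hqq tendsto_whithamQ
  have hlim2 : Tendsto h (𝓝[≠] (0:ℝ)) (𝓝 (h 0)) :=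
    (hh.continuousAt.tendsto).mono_left nhdsWithin_le_nhds
  have hlim3 : Tendsto h (𝓝[≠] (0:ℝ)) (𝓝 1) := Tendsto.congr' heq' hlim
  have hh0 : h 0 = 1 := tendsto_nhds_unique hlim2 hlim3
  have heq : whithamQ =ᶠ[𝓝 (0:ℝ)] h := by
    rw [eventually_nhdsWithin_iff] at heq'
    filter_upwards [heq'] with z hz
    rcases eq_or_ne z 0 with rfl | hz0
    · rw [hh0]; simp [whithamQ]
    · exact hz hz0
  exact (hh.contDiffAt.of_le le_top).congr_of_eventuallyEq heq

lemma contDiffAt_whithamQ {n : WithTop ℕ∞} (ξ : ℝ) : ContDiffAt ℝ n whithamQ ξ := by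
  rcases eq_or_ne ξ 0 with rfl | h
  · exact contDiffAt_whithamQ_zero
  · have h1 : ContDiffAt ℝ n (fun x => Real.tanh x / x) ξ :=
      (contDiff_tanh.contDiffAt).div contDiffAt_id h
    apply h1.congr_of_eventuallyEq
    filter_upwards [isOpen_ne.mem_nhds h] with z hz
    rw [whithamQ, if_neg hz]

lemma whithamSymbol_eq : whithamSymbol = fun ξ => Real.sqrt (whithamQ ξ) := by
  funext ξ
  rw [whithamSymbol, whithamQ]
  rcases eq_or_ne ξ 0 with rfl | h
  · simp
  · rw [if_neg h, if_neg h]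

lemma contDiff_whithamSymbol {n : WithTop ℕ∞} : ContDiff ℝ n whithamSymbol := by
  rw [contDiff_iff_contDiffAt]
  intro ξ
  rw [whithamSymbol_eq]
  exact (Real.contDiffAt_sqrt (whithamQ_pos ξ).ne').comp ξ (contDiffAt_whithamQ ξ)

lemma whithamSymbol_even (ξ : ℝ) : whithamSymbol (-ξ) = whithamSymbol ξ := by
  unfold whithamSymbol
  rcases eq_or_ne ξ 0 with rfl | h
  · simp
  · rw [if_neg (neg_ne_zero.mpr h), if_neg h, Real.tanh_neg, neg_div_neg_eq]

lemma abs_iteratedDeriv_whithamSymbol_neg (k : ℕ) (ξ : ℝ) :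
    |iteratedDeriv k whithamSymbol (-ξ)| = |iteratedDeriv k whithamSymbol ξ| := by
  have h : whithamSymbol = fun x => whithamSymbol (-x) :=
    funext fun x => (whithamSymbol_even x).symm
  conv_lhs => rw [h]
  rw [iteratedDeriv_comp_neg k whithamSymbol (-ξ), neg_neg]
  simp [abs_mul, abs_pow]

lemma whithamSymbol_compact_bound (k : ℕ) :
    ∃ C : ℝ, 0 < C ∧ ∀ ξ ∈ Set.Icc (-1:ℝ) 1, |iteratedDeriv k whithamSymbol ξ| ≤ C := by
  have hc : Continuous (iteratedDeriv k whithamSymbol) :=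
    (contDiff_whithamSymbol (n := (k : WithTop ℕ∞))).continuous_iteratedDeriv k le_rfl
  obtain ⟨C, hC⟩ := isCompact_Icc.exists_bound_of_continuousOn hc.continuousOn
  refine ⟨max C 1, lt_of_lt_of_le one_pos (le_max_right _ _), ?_⟩
  intro ξ hξ
  exact le_trans (hC ξ hξ) (le_max_left _ _)

lemma tanh_decay_unif : ∀ k : ℕ, ∃ M : ℝ, 1 ≤ M ∧ ∀ i, 1 ≤ i → i ≤ k → ∀ x : ℝ, 0 ≤ x →
    |iteratedDeriv i Real.tanh x| ≤ M * Real.exp (-(2 * x))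
  | 0 => ⟨1, le_rfl, by omega⟩
  | k+1 => by
    obtain ⟨M, hM1, hM⟩ := tanh_decay_unif k
    obtain ⟨C, hCpos, hC⟩ := tanh_iteratedDeriv_decay (k+1) (by omega)
    refine ⟨max M C, le_trans hM1 (le_max_left _ _), ?_⟩
    intro i h1 h2 x hx
    have hexp : (0:ℝ) < Real.exp (-(2 * x)) := Real.exp_pos _
    rcases Nat.lt_succ_iff_lt_or_eq.mp (Nat.lt_succ_of_le h2) with h | rfl
    · exact le_trans (hM i h1 (by omega) x hx)
        (mul_le_mul_of_nonneg_right (le_max_left _ _) hexp.le)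
    · exact le_trans (hC x hx) (mul_le_mul_of_nonneg_right (le_max_right _ _) hexp.le)

lemma tanh_mapsTo : Set.MapsTo Real.tanh (Set.Ioi (1/2 : ℝ)) (Set.Ioo (Real.tanh (1/2)) 1) :=
  fun x hx => ⟨tanh_strictMono hx, _root_.tanh_lt_one x⟩

lemma g_tail_bound (k : ℕ) : ∃ B : ℝ, 0 < B ∧ ∀ j, 1 ≤ j → j ≤ k → ∀ ξ : ℝ, 1 ≤ ξ →
    ‖iteratedFDerivWithin ℝ j (Real.sqrt ∘ Real.tanh) (Set.Ioi (1/2 : ℝ)) ξ‖ ≤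
      B * Real.exp (-(2 * ξ)) := by
  have hta : 0 < Real.tanh (1/2) := tanh_pos (by norm_num)
  have hta1 : Real.tanh (1/2) < 1 := _root_.tanh_lt_one _
  obtain ⟨Cs, hCs_pos, hCs⟩ := sqrt_iteratedDeriv_bound_unif hta hta1 k
  obtain ⟨M, hM1, hM⟩ := tanh_decay_unif k
  refine ⟨(k.factorial : ℝ) * Cs * M ^ k, by positivity, ?_⟩
  intro j hj1 hjk ξ hξ
  have hξs : ξ ∈ Set.Ioi (1/2 : ℝ) := by
    simp only [Set.mem_Ioi]; linarith
  have hjR : (0:ℝ) < (j:ℝ) := by positivity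
  set D : ℝ := M * Real.exp (-(2 * ξ) / j) with hD_def
  have key := norm_iteratedFDerivWithin_comp_le (𝕜 := ℝ)
    (g := Real.sqrt) (f := Real.tanh) (n := j) (N := (j : WithTop ℕ∞))
    (s := Set.Ioi (1/2 : ℝ)) (t := Set.Ioo (Real.tanh (1/2)) 1) (x := ξ)
    (C := Cs) (D := D)
    ?hg ?hf le_rfl isOpen_Ioo.uniqueDiffOn isOpen_Ioi.uniqueDiffOn tanh_mapsTo hξs ?hC ?hD
  case hg =>
    intro y hy
    exact (Real.contDiffAt_sqrt (ne_of_gt (lt_trans hta hy.1))).contDiffWithinAt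
  case hf => exact contDiff_tanh.contDiffOn
  case hC =>
    intro i hi
    have hmem : Real.tanh ξ ∈ Set.Ioo (Real.tanh (1/2)) 1 := tanh_mapsTo hξs
    rw [iteratedFDerivWithin_of_isOpen i isOpen_Ioo hmem,
      norm_iteratedFDeriv_eq_norm_iteratedDeriv, Real.norm_eq_abs]
    exact hCs i (le_trans hi hjk) _ hmem
  case hD =>
    intro i hi1 hij
    rw [iteratedFDerivWithin_of_isOpen i isOpen_Ioi hξs,
      norm_iteratedFDeriv_eq_norm_iteratedDeriv, Real.norm_eq_abs]
    have h1 : |iteratedDeriv i Real.tanh ξ| ≤ M * Real.exp (-(2 * ξ)) :=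
      hM i hi1 (le_trans hij hjk) ξ (by linarith)
    have h2 : M * Real.exp (-(2 * ξ)) ≤ D ^ i := by
      rw [hD_def, mul_pow]
      have hMi : M ≤ M ^ i := le_self_pow₀ hM1 (by omega)
      have hexpi : Real.exp (-(2 * ξ)) ≤ Real.exp (-(2 * ξ) / j) ^ i := by
        rw [← Real.exp_nat_mul]
        apply Real.exp_le_exp.mpr
        rw [div_eq_mul_inv]
        have hij' : (i:ℝ) ≤ (j:ℝ) := Nat.cast_le.mpr hij
        have hji : (0:ℝ) < ((j:ℝ))⁻¹ := by positivity
        have hi0 : (0:ℝ) ≤ (i:ℝ) := by positivity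
        have hx0 : (0:ℝ) ≤ 2 * ξ := by linarith
        rw [show (i:ℝ) * (-(2*ξ) * ((j:ℝ))⁻¹) = -((2*ξ) * ((i:ℝ) * ((j:ℝ))⁻¹)) by ring,
          neg_le_neg_iff]
        have hfrac : (i:ℝ) * ((j:ℝ))⁻¹ ≤ 1 := by
          rw [← div_eq_mul_inv, div_le_one hjR]
          exact hij'
        nlinarith
      calc M * Real.exp (-(2 * ξ)) ≤ M ^ i * Real.exp (-(2 * ξ) / j) ^ i := by
            apply mul_le_mul hMi hexpi (Real.exp_pos _).le (by positivity)
        _ = _ := rfl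
    exact le_trans h1 h2
  refine le_trans key ?_
  have hDj : D ^ j = M ^ j * Real.exp (-(2 * ξ)) := by
    rw [hD_def, mul_pow, ← Real.exp_nat_mul]
    congr 1
    field_simp
  rw [hDj]
  have h1 : (j.factorial : ℝ) ≤ (k.factorial : ℝ) := Nat.cast_le.mpr (Nat.factorial_le hjk)
  have h2 : M ^ j ≤ M ^ k := pow_le_pow_right₀ hM1 hjk
  have hexp : (0:ℝ) < Real.exp (-(2 * ξ)) := Real.exp_pos _
  have hj0 : (0:ℝ) ≤ (j.factorial : ℝ) := by positivity
  have h3 : (j.factorial : ℝ) * M ^ j ≤ (k.factorial : ℝ) * M ^ k :=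
    mul_le_mul h1 h2 (pow_pos (lt_of_lt_of_le one_pos hM1) j).le (by positivity)
  have h4 : (j.factorial : ℝ) * Cs * (M ^ j * Real.exp (-(2*ξ))) =
      ((j.factorial : ℝ) * M ^ j) * Cs * Real.exp (-(2*ξ)) := by ring
  have h5 : (k.factorial : ℝ) * Cs * M ^ k * Real.exp (-(2*ξ)) =
      ((k.factorial : ℝ) * M ^ k) * Cs * Real.exp (-(2*ξ)) := by ring
  rw [h4, h5]
  apply mul_le_mul_of_nonneg_right _ hexp.le
  exact mul_le_mul_of_nonneg_right h3 hCs_pos.le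

lemma exp_poly_bound (k : ℕ) {x : ℝ} (hx : 1 ≤ x) :
    (1 + x) ^ (k : ℝ) * Real.exp (-(2 * x)) ≤ (k.factorial : ℝ) := by
  have h0 : (0:ℝ) ≤ 1 + x := by linarith
  rw [Real.rpow_natCast]
  have h1 : (1 + x) ^ k ≤ (2 * x) ^ k := pow_le_pow_left₀ h0 (by linarith) k
  have h2 : (2 * x) ^ k ≤ (k.factorial : ℝ) * Real.exp (2 * x) := by
    have h3 : (2*x) ^ k / (k.factorial : ℝ) ≤ Real.exp (2 * x) := by
      calc (2*x) ^ k / (k.factorial : ℝ)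
          ≤ ∑ i ∈ Finset.range (k+1), (2*x) ^ i / (i.factorial : ℝ) := by
            apply Finset.single_le_sum (f := fun i => (2*x) ^ i / (i.factorial : ℝ))
              (fun i _ => by positivity) (Finset.self_mem_range_succ k)
        _ ≤ Real.exp (2 * x) := by
            have := Real.sum_le_exp_of_nonneg (x := 2*x) (by linarith) (k+1)
            convert this using 2
      -- factorials as ! notation mismatch?
    rw [div_le_iff₀ (by positivity)] at h3
    calc (2*x)^k ≤ Real.exp (2*x) * (k.factorial:ℝ) := h3
      _ = (k.factorial : ℝ) * Real.exp (2*x) := by ring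
  have hexp : Real.exp (-(2*x)) = (Real.exp (2*x))⁻¹ := by rw [← Real.exp_neg]
  rw [hexp]
  have hep : (0:ℝ) < Real.exp (2*x) := Real.exp_pos _
  calc (1+x)^k * (Real.exp (2*x))⁻¹ ≤ (2*x)^k * (Real.exp (2*x))⁻¹ :=
        mul_le_mul_of_nonneg_right h1 (by positivity)
    _ ≤ ((k.factorial:ℝ) * Real.exp (2*x)) * (Real.exp (2*x))⁻¹ :=
        mul_le_mul_of_nonneg_right h2 (by positivity)
    _ = (k.factorial : ℝ) := by field_simp

lemma rpow_tail_ineq {e x : ℝ} (he : 0 ≤ e) (hx : 1 ≤ x) :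
    x ^ (-e) ≤ 2 ^ e * (1 + x) ^ (-e) := by
  have hx0 : (0:ℝ) < x := by linarith
  have h1x : (0:ℝ) < 1 + x := by linarith
  have h1 : (1 + x) ^ e ≤ 2 ^ e * x ^ e := by
    calc (1 + x) ^ e ≤ (2 * x) ^ e := Real.rpow_le_rpow h1x.le (by linarith) he
      _ = 2 ^ e * x ^ e := Real.mul_rpow (by norm_num) hx0.le
  rw [Real.rpow_neg hx0.le, Real.rpow_neg h1x.le]
  have h2 : (0:ℝ) < x ^ e := Real.rpow_pos_of_pos hx0 _
  have h3 : (0:ℝ) < (1 + x) ^ e := Real.rpow_pos_of_pos h1x _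
  rw [inv_eq_one_div, div_le_iff₀ h2]
  have h4 : ((1+x)^e)⁻¹ * (1+x)^e = 1 := inv_mul_cancel₀ h3.ne'
  nlinarith [mul_le_mul_of_nonneg_left h1 (le_of_lt (inv_pos.mpr h3))]

lemma whithamSymbol_eqOn_tail :
    Set.EqOn whithamSymbol
      (fun y => (fun z : ℝ => z ^ (-(1/2) : ℝ)) y * (Real.sqrt ∘ Real.tanh) y)
      (Set.Ioi (1/2 : ℝ)) := by
  intro ξ hξ
  have hξ0 : (0:ℝ) < ξ := lt_trans (by norm_num) hξ
  simp only [Function.comp]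
  rw [whithamSymbol, if_neg hξ0.ne']
  rw [Real.sqrt_div (tanh_pos hξ0).le]
  rw [Real.rpow_neg hξ0.le, ← Real.sqrt_eq_rpow, div_eq_mul_inv, mul_comm]

lemma f_tail_bound (k : ℕ) : ∃ A : ℝ, 0 < A ∧ ∀ i ≤ k, ∀ ξ : ℝ, 1 ≤ ξ →
    |iteratedDeriv i (fun z : ℝ => z ^ (-(1/2) : ℝ)) ξ| ≤ A * (1 + ξ) ^ (-(1/2 : ℝ) - i) := by
  refine ⟨(Finset.range (k+1)).sup' (by simp)
      (fun i => |∏ j ∈ Finset.range i, (-(1/2:ℝ) - j)| * 2 ^ ((1/2:ℝ) + i)) + 1, ?_, ?_⟩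
  · have h0 : (0:ℝ) < |∏ j ∈ Finset.range 0, (-(1/2:ℝ) - j)| * 2 ^ ((1/2:ℝ) + (0:ℕ)) := by
      simp only [Finset.range_zero, Finset.prod_empty, abs_one, one_mul]
      positivity
    have := Finset.le_sup' (fun i => |∏ j ∈ Finset.range i, (-(1/2:ℝ) - j)| * 2 ^ ((1/2:ℝ) + i))
      (Finset.mem_range.mpr (Nat.succ_pos k))
    linarith
  · intro i hi ξ hξ
    have hξ0 : (0:ℝ) < ξ := by linarith
    rw [iteratedDeriv_rpow_const _ _ ξ hξ0, abs_mul]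
    have he : -(1/2:ℝ) - i = -((1/2:ℝ) + i) := by ring
    have habs : |ξ ^ (-(1/2:ℝ) - (i:ℝ))| = ξ ^ (-(1/2:ℝ) - i) :=
      abs_of_nonneg (Real.rpow_nonneg hξ0.le _)
    rw [habs]
    have hb : ξ ^ (-(1/2:ℝ) - i) ≤ 2 ^ ((1/2:ℝ) + i) * (1 + ξ) ^ (-(1/2:ℝ) - i) := by
      rw [he]
      exact rpow_tail_ineq (by positivity) hξ
    have hsup := Finset.le_sup' (fun i => |∏ j ∈ Finset.range i, (-(1/2:ℝ) - j)| * 2 ^ ((1/2:ℝ) + i))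
      (Finset.mem_range.mpr (Nat.lt_succ_of_le hi))
    have hW : (0:ℝ) < (1 + ξ) ^ (-(1/2:ℝ) - i) := Real.rpow_pos_of_pos (by linarith) _
    calc |∏ j ∈ Finset.range i, (-(1/2:ℝ) - j)| * ξ ^ (-(1/2:ℝ) - i)
        ≤ |∏ j ∈ Finset.range i, (-(1/2:ℝ) - j)| * (2 ^ ((1/2:ℝ) + i) * (1 + ξ) ^ (-(1/2:ℝ) - i)) :=
          mul_le_mul_of_nonneg_left hb (abs_nonneg _)
      _ = (|∏ j ∈ Finset.range i, (-(1/2:ℝ) - j)| * 2 ^ ((1/2:ℝ) + i)) * (1 + ξ) ^ (-(1/2:ℝ) - i) := by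
          ring
      _ ≤ _ := by
          apply mul_le_mul_of_nonneg_right _ hW.le
          linarith [hsup]

lemma whithamSymbol_tail (k : ℕ) : ∃ C : ℝ, 0 < C ∧ ∀ ξ : ℝ, 1 ≤ ξ →
    |iteratedDeriv k whithamSymbol ξ| ≤ C * (1 + ξ) ^ (-(1/2 : ℝ) - k) := by
  obtain ⟨A, hA, hAb⟩ := f_tail_bound k
  obtain ⟨B, hB, hBb⟩ := g_tail_bound k
  set K : ℝ := A * (B + 1) * ((k.factorial : ℝ) + 1) with hK_def
  have hK : 0 < K := by positivity
  refine ⟨2 ^ k * K, by positivity, ?_⟩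
  intro ξ hξ
  set s := Set.Ioi (1/2 : ℝ) with hs_def
  set f : ℝ → ℝ := fun z => z ^ (-(1/2) : ℝ) with hf_def
  set g : ℝ → ℝ := Real.sqrt ∘ Real.tanh with hg_def
  have hξs : ξ ∈ s := by simp only [hs_def, Set.mem_Ioi]; linarith
  have hpos : (0:ℝ) < 1 + ξ := by linarith
  set W : ℝ := (1 + ξ) ^ (-(1/2 : ℝ) - (k:ℝ)) with hW_def
  have hW : 0 < W := Real.rpow_pos_of_pos hpos _
  have e1 : |iteratedDeriv k whithamSymbol ξ| =
      ‖iteratedFDerivWithin ℝ k (fun y => f y * g y) s ξ‖ := by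
    rw [← iteratedFDerivWithin_congr whithamSymbol_eqOn_tail hξs k,
      iteratedFDerivWithin_of_isOpen k isOpen_Ioi hξs,
      norm_iteratedFDeriv_eq_norm_iteratedDeriv, Real.norm_eq_abs]
  have hfC : ContDiffOn ℝ (k : WithTop ℕ∞) f s := fun x hx =>
    (Real.contDiffAt_rpow_const_of_ne
      (ne_of_gt (lt_trans (by norm_num) hx))).contDiffWithinAt
  have hgC : ContDiffOn ℝ (k : WithTop ℕ∞) g s := fun x hx =>
    ((Real.contDiffAt_sqrt (tanh_pos (lt_trans (by norm_num) hx)).ne').comp x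
      contDiff_tanh.contDiffAt).contDiffWithinAt
  have hmul := norm_iteratedFDerivWithin_mul_le hfC hgC isOpen_Ioi.uniqueDiffOn hξs
    (le_refl (k : WithTop ℕ∞))
  have hfn : ∀ i, ‖iteratedFDerivWithin ℝ i f s ξ‖ = |iteratedDeriv i f ξ| := fun i => by
    rw [iteratedFDerivWithin_of_isOpen i isOpen_Ioi hξs,
      norm_iteratedFDeriv_eq_norm_iteratedDeriv, Real.norm_eq_abs]
  have hterm : ∀ i ∈ Finset.range (k+1),
      (k.choose i : ℝ) * ‖iteratedFDerivWithin ℝ i f s ξ‖ *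
        ‖iteratedFDerivWithin ℝ (k-i) g s ξ‖ ≤ (k.choose i : ℝ) * K * W := by
    intro i hi
    rw [Finset.mem_range] at hi
    have hik : i ≤ k := Nat.lt_succ_iff.mp hi
    have hchoose : (0:ℝ) ≤ (k.choose i : ℝ) := by positivity
    have hfb : ‖iteratedFDerivWithin ℝ i f s ξ‖ ≤ A * (1 + ξ) ^ (-(1/2 : ℝ) - i) := by
      rw [hfn i]; exact hAb i hik ξ hξ
    have hfb_pos : (0:ℝ) ≤ ‖iteratedFDerivWithin ℝ i f s ξ‖ := norm_nonneg _
    rcases eq_or_lt_of_le hik with hik_eq | hlt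
    · -- i = k case
      have hki0 : k - i = 0 := by omega
      have hg0 : ‖iteratedFDerivWithin ℝ (k-i) g s ξ‖ ≤ 1 := by
        rw [hki0]
        rw [iteratedFDerivWithin_of_isOpen 0 isOpen_Ioi hξs,
          norm_iteratedFDeriv_eq_norm_iteratedDeriv, Real.norm_eq_abs, iteratedDeriv_zero]
        have h1 : g ξ = Real.sqrt (Real.tanh ξ) := rfl
        rw [h1, abs_of_nonneg (Real.sqrt_nonneg _)]
        exact Real.sqrt_le_one.mpr (_root_.tanh_lt_one ξ).le
      have hKW : A * (1 + ξ) ^ (-(1/2 : ℝ) - (i:ℝ)) ≤ K * W := by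
        have hWi : (1 + ξ) ^ (-(1/2 : ℝ) - (i:ℝ)) = W := by
          rw [hW_def, hik_eq]
        rw [hWi, hK_def]
        apply mul_le_mul_of_nonneg_right _ hW.le
        have hf1 : (1:ℝ) ≤ (k.factorial : ℝ) := by
          exact_mod_cast Nat.one_le_iff_ne_zero.mpr k.factorial_ne_zero
        have h2 : (1:ℝ) ≤ (B + 1) * ((k.factorial : ℝ) + 1) := by nlinarith
        nlinarith [mul_le_mul_of_nonneg_left h2 hA.le]
      calc (k.choose i : ℝ) * ‖iteratedFDerivWithin ℝ i f s ξ‖ *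
            ‖iteratedFDerivWithin ℝ (k-i) g s ξ‖
          ≤ (k.choose i : ℝ) * (A * (1 + ξ) ^ (-(1/2 : ℝ) - i)) * 1 := by
            apply mul_le_mul (mul_le_mul_of_nonneg_left hfb hchoose) hg0 (norm_nonneg _)
            positivity
        _ = (k.choose i : ℝ) * (A * (1 + ξ) ^ (-(1/2 : ℝ) - i)) := mul_one _
        _ ≤ (k.choose i : ℝ) * (K * W) := mul_le_mul_of_nonneg_left hKW hchoose
        _ = (k.choose i : ℝ) * K * W := by ring
    · -- i < k case
      have hki1 : 1 ≤ k - i := by omega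
      have hkik : k - i ≤ k := Nat.sub_le k i
      have hgb : ‖iteratedFDerivWithin ℝ (k-i) g s ξ‖ ≤ B * Real.exp (-(2 * ξ)) :=
        hBb (k-i) hki1 hkik ξ hξ
      -- key: (1+ξ)^(-(1/2)-i) * exp(-(2ξ)) ≤ k! * W
      have hkey : (1 + ξ) ^ (-(1/2 : ℝ) - (i:ℝ)) * Real.exp (-(2 * ξ)) ≤
          (k.factorial : ℝ) * W := by
        have hsplit : (1 + ξ) ^ (-(1/2 : ℝ) - (i:ℝ)) =
            W * (1 + ξ) ^ ((k:ℝ) - (i:ℝ)) := by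
          rw [hW_def, ← Real.rpow_add hpos]
          congr 1
          ring
        rw [hsplit]
        have hmono : (1 + ξ) ^ ((k:ℝ) - (i:ℝ)) ≤ (1 + ξ) ^ (k:ℝ) := by
          apply Real.rpow_le_rpow_of_exponent_le (by linarith)
          have : (0:ℝ) ≤ (i:ℝ) := by positivity
          linarith
        calc W * (1 + ξ) ^ ((k:ℝ) - (i:ℝ)) * Real.exp (-(2 * ξ))
            ≤ W * (1 + ξ) ^ (k:ℝ) * Real.exp (-(2 * ξ)) := by
              apply mul_le_mul_of_nonneg_right _ (Real.exp_pos _).le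
              exact mul_le_mul_of_nonneg_left hmono hW.le
          _ = W * ((1 + ξ) ^ (k:ℝ) * Real.exp (-(2 * ξ))) := by ring
          _ ≤ W * (k.factorial : ℝ) := mul_le_mul_of_nonneg_left (exp_poly_bound k hξ) hW.le
          _ = (k.factorial : ℝ) * W := by ring
      calc (k.choose i : ℝ) * ‖iteratedFDerivWithin ℝ i f s ξ‖ *
            ‖iteratedFDerivWithin ℝ (k-i) g s ξ‖
          ≤ (k.choose i : ℝ) * (A * (1 + ξ) ^ (-(1/2 : ℝ) - i)) * (B * Real.exp (-(2 * ξ))) := by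
            apply mul_le_mul (mul_le_mul_of_nonneg_left hfb hchoose) hgb (norm_nonneg _)
            positivity
        _ = (k.choose i : ℝ) * (A * B) *
              ((1 + ξ) ^ (-(1/2 : ℝ) - (i:ℝ)) * Real.exp (-(2 * ξ))) := by ring
        _ ≤ (k.choose i : ℝ) * (A * B) * ((k.factorial : ℝ) * W) := by
            apply mul_le_mul_of_nonneg_left hkey
            positivity
        _ ≤ (k.choose i : ℝ) * K * W := by
            rw [hK_def]
            have : (k.choose i : ℝ) * (A * B) * ((k.factorial : ℝ) * W) =
              (k.choose i : ℝ) * (A * (B * (k.factorial : ℝ))) * W := by ring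
            rw [this]
            apply mul_le_mul_of_nonneg_right _ hW.le
            apply mul_le_mul_of_nonneg_left _ hchoose
            have hfp : (0:ℝ) < (k.factorial : ℝ) := by positivity
            nlinarith
  calc |iteratedDeriv k whithamSymbol ξ|
      = ‖iteratedFDerivWithin ℝ k (fun y => f y * g y) s ξ‖ := e1
    _ ≤ ∑ i ∈ Finset.range (k+1), (k.choose i : ℝ) * ‖iteratedFDerivWithin ℝ i f s ξ‖ *
          ‖iteratedFDerivWithin ℝ (k-i) g s ξ‖ := hmul
    _ ≤ ∑ i ∈ Finset.range (k+1), (k.choose i : ℝ) * K * W := Finset.sum_le_sum hterm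
    _ = (∑ i ∈ Finset.range (k+1), (k.choose i : ℝ)) * K * W := by
        rw [← Finset.sum_mul, ← Finset.sum_mul]
    _ = 2 ^ k * K * W := by
        rw [show (∑ i ∈ Finset.range (k+1), (k.choose i : ℝ)) = ((2:ℝ))^k by
          rw [← Nat.cast_sum, Nat.sum_range_choose]; push_cast; ring]
    _ = 2 ^ k * K * (1 + ξ) ^ (-(1/2 : ℝ) - k) := by rw [hW_def]

theorem whithamSymbol_symbol_class :
    ∀ k : ℕ, ∃ c : ℝ, 0 < c ∧ ∀ ξ : ℝ,
      |iteratedDeriv k whithamSymbol ξ| ≤ c * (1 + |ξ|) ^ (-(1/2 : ℝ) - k) := by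
  intro k
  obtain ⟨C₁, hC₁, hC₁b⟩ := whithamSymbol_compact_bound k
  obtain ⟨C₂, hC₂, hC₂b⟩ := whithamSymbol_tail k
  refine ⟨C₁ * 2 ^ ((1/2:ℝ) + k) + C₂, by positivity, ?_⟩
  intro ξ
  have hb0 : (0:ℝ) < 1 + |ξ| := by positivity
  have hWpos : 0 < (1 + |ξ|) ^ (-(1/2:ℝ) - k) := Real.rpow_pos_of_pos hb0 _
  have hk0 : (0:ℝ) ≤ (k:ℝ) := by positivity
  rcases le_or_gt (|ξ|) 1 with hle | hgt
  · have h1 : |iteratedDeriv k whithamSymbol ξ| ≤ C₁ :=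
      hC₁b ξ (Set.mem_Icc.mpr (abs_le.mp hle))
    have h2 : (2:ℝ) ^ (-(1/2:ℝ) - k) ≤ (1 + |ξ|) ^ (-(1/2:ℝ) - k) :=
      Real.rpow_le_rpow_of_nonpos hb0 (by linarith) (by linarith)
    have h3 : (C₁ * 2 ^ ((1/2:ℝ) + k)) * (2:ℝ) ^ (-(1/2:ℝ) - k) = C₁ := by
      rw [mul_assoc, ← Real.rpow_add (by norm_num : (0:ℝ) < 2)]
      norm_num
    have key : C₁ ≤ (C₁ * 2 ^ ((1/2:ℝ) + k)) * (1 + |ξ|) ^ (-(1/2:ℝ) - k) := by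
      calc C₁ = (C₁ * 2 ^ ((1/2:ℝ) + k)) * (2:ℝ) ^ (-(1/2:ℝ) - k) := h3.symm
        _ ≤ _ := mul_le_mul_of_nonneg_left h2 (by positivity)
    have hC₂W : 0 ≤ C₂ * (1 + |ξ|) ^ (-(1/2:ℝ) - k) := by positivity
    calc |iteratedDeriv k whithamSymbol ξ| ≤ C₁ := h1
      _ ≤ (C₁ * 2 ^ ((1/2:ℝ) + k)) * (1 + |ξ|) ^ (-(1/2:ℝ) - k) := key
      _ ≤ (C₁ * 2 ^ ((1/2:ℝ) + k) + C₂) * (1 + |ξ|) ^ (-(1/2:ℝ) - k) := by nlinarith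
  · have h1 : |iteratedDeriv k whithamSymbol ξ| ≤ C₂ * (1 + |ξ|) ^ (-(1/2:ℝ) - k) := by
      rcases le_or_gt 0 ξ with hsgn | hsgn
      · have hξ1 : 1 ≤ ξ := by rw [abs_of_nonneg hsgn] at hgt; exact hgt.le
        have := hC₂b ξ hξ1
        rwa [abs_of_nonneg hsgn]
      · have habs : |ξ| = -ξ := abs_of_neg hsgn
        have hξ1 : 1 ≤ -ξ := by rw [← habs]; exact hgt.le
        have h := hC₂b (-ξ) hξ1
        rw [abs_iteratedDeriv_whithamSymbol_neg k ξ] at h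
        rwa [habs]
    have hW1 : 0 ≤ C₁ * 2 ^ ((1/2:ℝ) + k) * (1 + |ξ|) ^ (-(1/2:ℝ) - k) := by positivity
    nlinarith
end

section
/- If f is a 2π-periodic α-Hölder continuous function with α > 1/2, then its Fourier series converges absolutely: the sum over k ∈ ℤ of the absolute values of its Fourier coefficients is finite. -/
open scoped Real
open MeasureTheory Complex

private theorem bern_cont_integrable {X : Type*} [MeasurableSpace X] [TopologicalSpace X]
    [OpensMeasurableSpace X] [CompactSpace X] {μ : Measure X} [IsFiniteMeasure μ]
    {g : X → ℂ} (hg : Continuous g) : Integrable g μ := by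
  have := (BoundedContinuousFunction.mkOfCompact ⟨g, hg⟩).integrable (μ := μ)
  exact this

private theorem bern_fourier_arg_add {T : ℝ} (n : ℤ) (a b : AddCircle T) :
    fourier n (a + b) = fourier n a * fourier n b := by
  simp_rw [fourier_apply, smul_add, AddCircle.toCircle_add, Circle.coe_mul]

private theorem bern_translate_coeff {T : ℝ} [hT : Fact (0 < T)] (F : C(AddCircle T, ℂ))
    (h : ℝ) (k : ℤ) :
    fourierCoeff (fun t : AddCircle T => F (t + (h : AddCircle T)) - F t) k
      = (fourier (-k) ((-h : ℝ) : AddCircle T) - 1) * fourierCoeff (⇑F) k := by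
  have hcont : Continuous fun t : AddCircle T => F (t + (h : AddCircle T)) :=
    F.continuous.comp (continuous_id.add continuous_const)
  have hint1 : Integrable (fun t : AddCircle T => fourier (-k) t • F (t + (h : AddCircle T)))
      AddCircle.haarAddCircle := bern_cont_integrable ((fourier (-k)).continuous.smul hcont)
  have hint2 : Integrable (fun t : AddCircle T => fourier (-k) t • F t)
      AddCircle.haarAddCircle :=
    bern_cont_integrable ((fourier (-k)).continuous.smul F.continuous)
  unfold fourierCoeff
  simp_rw [smul_sub]
  rw [integral_sub hint1 hint2]
  have step : (∫ t : AddCircle T, fourier (-k) t • F (t + (h : AddCircle T))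
      ∂AddCircle.haarAddCircle)
      = fourier (-k) ((-h : ℝ) : AddCircle T) * ∫ t : AddCircle T, fourier (-k) t • F t
        ∂AddCircle.haarAddCircle := by
    have key := integral_add_right_eq_self
      (μ := (AddCircle.haarAddCircle : Measure (AddCircle T)))
      (fun t : AddCircle T => fourier (-k) (t + ((-h : ℝ) : AddCircle T)) • F t)
      ((h : ℝ) : AddCircle T)
    have e1 : ∀ t : AddCircle T, t + ((h:ℝ) : AddCircle T) + ((-h:ℝ) : AddCircle T) = t := by
      intro t
      rw [add_assoc, ← AddCircle.coe_add]
      simp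
    simp_rw [e1] at key
    calc (∫ t : AddCircle T, fourier (-k) t • F (t + (h : AddCircle T)) ∂AddCircle.haarAddCircle)
        = ∫ t : AddCircle T, fourier (-k) (t + ((-h:ℝ) : AddCircle T)) • F t
          ∂AddCircle.haarAddCircle := key
      _ = ∫ t : AddCircle T, fourier (-k) ((-h:ℝ) : AddCircle T) * (fourier (-k) t • F t)
          ∂AddCircle.haarAddCircle := by
          congr 1; ext t; rw [bern_fourier_arg_add]; rw [smul_eq_mul, smul_eq_mul]; ring
      _ = _ := by rw [integral_const_mul]
  rw [step]
  ring

private theorem bern_bessel_bound {T : ℝ} [hT : Fact (0 < T)] (G : C(AddCircle T, ℂ))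
    (s : Finset ℤ) :
    ∑ k ∈ s, ‖fourierCoeff (⇑G) k‖ ^ 2 ≤ ‖G‖ ^ 2 := by
  have h1 : ∀ k : ℤ, fourierCoeff (⇑G) k
      = fourierBasis.repr (ContinuousMap.toLp 2 AddCircle.haarAddCircle ℂ G) k := by
    intro k
    rw [fourierBasis_repr, fourierCoeff_toLp]
  calc ∑ k ∈ s, ‖fourierCoeff (⇑G) k‖ ^ 2
      = ∑ k ∈ s, ‖(inner ℂ (fourierLp 2 k)
          (ContinuousMap.toLp 2 AddCircle.haarAddCircle ℂ G) : ℂ)‖ ^ 2 := by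
        refine Finset.sum_congr rfl fun k _ => ?_
        rw [h1 k, fourierBasis.repr_apply_apply, coe_fourierBasis]
    _ ≤ ‖ContinuousMap.toLp 2 AddCircle.haarAddCircle ℂ G‖ ^ 2 :=
        orthonormal_fourier.sum_inner_products_le _
    _ ≤ ‖G‖ ^ 2 := by
        have h2 : ‖ContinuousMap.toLp 2 AddCircle.haarAddCircle ℂ G‖ ≤ ‖G‖ := by
          refine le_trans ((ContinuousMap.toLp (E := ℂ) 2 AddCircle.haarAddCircle
            ℂ).le_opNorm G) ?_
          have h3 := ContinuousMap.toLp_norm_le (E := ℂ)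
            (AddCircle.haarAddCircle : Measure (AddCircle T)) (𝕜 := ℂ) (p := 2)
          have h4 : measureUnivNNReal (AddCircle.haarAddCircle : Measure (AddCircle T)) = 1 := by
            simp [measureUnivNNReal]
          rw [h4] at h3
          rw [NNReal.coe_one, Real.one_rpow] at h3
          nlinarith [norm_nonneg G,
            ContinuousLinearMap.opNorm_nonneg (ContinuousMap.toLp (E := ℂ) 2
              AddCircle.haarAddCircle ℂ : C(AddCircle T, ℂ) →L[ℂ] Lp ℂ 2 AddCircle.haarAddCircle)]
        have := norm_nonneg (ContinuousMap.toLp 2 AddCircle.haarAddCircle ℂ G)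
        nlinarith

private theorem bern_factor_ge {θ : ℝ} (h1 : π/2 ≤ |θ|) (h2 : |θ| ≤ π + π/2) :
    1 ≤ ‖Complex.exp ((θ : ℂ) * Complex.I) - 1‖ := by
  have hcos : Real.cos θ ≤ 0 := by
    rw [← Real.cos_abs]
    exact Real.cos_nonpos_of_pi_div_two_le_of_le h1 h2
  have hsq : ‖Complex.exp ((θ : ℂ) * Complex.I) - 1‖ ^ 2 = 2 - 2 * Real.cos θ := by
    rw [Complex.exp_mul_I, Complex.sq_norm]
    have : (Complex.cos θ + Complex.sin θ * Complex.I - 1)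
        = Complex.mk (Real.cos θ - 1) (Real.sin θ) := by
      apply Complex.ext <;> simp [Complex.cos_ofReal_re, Complex.sin_ofReal_re]
    rw [this, Complex.normSq_mk]
    nlinarith [Real.sin_sq_add_cos_sq θ]
  nlinarith [norm_nonneg (Complex.exp ((θ : ℂ) * Complex.I) - 1)]

theorem bernstein_absolute_convergence (f : ℝ → ℝ) (C α : NNReal)
    (hper : Function.Periodic f (2 * π)) (hα : (1/2 : ℝ) < α) (hα1 : (α : ℝ) ≤ 1)
    (hf : HolderWith C α f) :
    Summable fun k : ℤ =>
      ‖(1 / (2 * π : ℂ)) * ∫ x in (0:ℝ)..(2 * π),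
        Complex.exp (-Complex.I * k * x) * (f x : ℂ)‖ := by
  haveI hT : Fact (0 < 2 * π) := ⟨by positivity⟩
  have hπ : (0:ℝ) < π := Real.pi_pos
  have hα0 : 0 < (α : ℝ) := lt_trans (by norm_num) hα
  have hfc : Continuous f := hf.continuous (by exact_mod_cast hα0)
  have hperC : Function.Periodic (fun x => (f x : ℂ)) (2 * π) := fun x => by simp [hper x]
  have hFcont : Continuous hperC.lift :=
    (Complex.continuous_ofReal.comp hfc).quotient_liftOn' _
  set F : C(AddCircle (2 * π), ℂ) := ⟨hperC.lift, hFcont⟩ with hFdef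
  set a : ℤ → ℝ := fun k => ‖fourierCoeff (⇑F) k‖ with hadef
  have ha0 : ∀ k, 0 ≤ a k := fun k => norm_nonneg _
  -- Step 1: identify the summand with ‖fourierCoeff F k‖
  have key : ∀ k : ℤ, (1 / (2 * π : ℂ)) * ∫ x in (0:ℝ)..(2 * π),
      Complex.exp (-Complex.I * k * x) * (f x : ℂ) = fourierCoeff (⇑F) k := by
    intro k
    rw [fourierCoeff_eq_intervalIntegral (⇑F) k 0, zero_add, Complex.real_smul]
    congr 1
    · push_cast; ring
    · apply intervalIntegral.integral_congr
      intro x hx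
      show cexp (-I * ↑k * ↑x) * ↑(f x) = (fourier (-k)) ↑x • F ↑x
      have h1 : (⇑F) ↑x = (f x : ℂ) := hperC.lift_coe x
      rw [h1, fourier_coe_apply, smul_eq_mul]
      congr 2
      have hπc : (π : ℂ) ≠ 0 := by exact_mod_cast Real.pi_ne_zero
      push_cast
      field_simp
  have hgoal : (fun k : ℤ =>
      ‖(1 / (2 * π : ℂ)) * ∫ x in (0:ℝ)..(2 * π),
        Complex.exp (-Complex.I * k * x) * (f x : ℂ)‖) = a :=
    funext fun k => by rw [key k]
  rw [hgoal]
  -- step 2: block estimate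
  have block : ∀ (n : ℕ) (s : Finset ℤ),
      (∀ k ∈ s, 2^n ≤ k.natAbs ∧ k.natAbs < 2^(n+1)) →
      ∑ k ∈ s, a k ^ 2 ≤ ((C : ℝ) * ((3*π/4)/2^n) ^ (α : ℝ)) ^ 2 := by
    intro n s hs
    set h : ℝ := (3*π/4)/2^n with hhdef
    have h2pos : (0:ℝ) < (2:ℝ)^n := by positivity
    have hpos : 0 < h := by positivity
    have hGc : Continuous fun t : AddCircle (2*π) => F (t + ((h:ℝ) : AddCircle (2*π))) - F t :=
      (F.continuous.comp (continuous_id.add continuous_const)).sub F.continuous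
    set G : C(AddCircle (2*π), ℂ) := ⟨_, hGc⟩ with hGdef
    -- sup-norm bound on G
    have hGnorm : ‖G‖ ≤ (C : ℝ) * h ^ (α : ℝ) := by
      have hb : (0:ℝ) ≤ (C : ℝ) * h ^ (α : ℝ) := by positivity
      rw [ContinuousMap.norm_le _ hb]
      intro t
      induction t using QuotientAddGroup.induction_on with
      | H x =>
        show ‖F (↑x + ((h:ℝ) : AddCircle (2*π))) - F ↑x‖ ≤ _
        rw [← AddCircle.coe_add]
        have e1 : (⇑F) ↑(x + h) = ((f (x + h) : ℝ) : ℂ) := hperC.lift_coe (x + h)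
        have e2 : (⇑F) ↑x = ((f x : ℝ) : ℂ) := hperC.lift_coe x
        rw [e1, e2, ← Complex.ofReal_sub, Complex.norm_real]
        have := hf.dist_le (x + h) x
        rw [Real.dist_eq, Real.dist_eq] at this
        simpa [abs_of_pos hpos] using this
    -- each coefficient of F is dominated by that of G
    have hdom : ∀ k ∈ s, a k ≤ ‖fourierCoeff (⇑G) k‖ := by
      intro k hk
      obtain ⟨hk1, hk2⟩ := hs k hk
      have hcoeff : fourierCoeff (⇑G) k
          = (fourier (-k) ((-h : ℝ) : AddCircle (2*π)) - 1) * fourierCoeff (⇑F) k :=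
        bern_translate_coeff F h k
      rw [hcoeff, norm_mul]
      have hfac : 1 ≤ ‖fourier (-k) ((-h : ℝ) : AddCircle (2*π)) - 1‖ := by
        have hrw : (fourier (-k) ((-h : ℝ) : AddCircle (2*π)) : ℂ)
            = Complex.exp ((((k : ℝ) * h : ℝ) : ℂ) * Complex.I) := by
          rw [fourier_coe_apply]
          congr 1
          have hπc : (π : ℂ) ≠ 0 := by exact_mod_cast Real.pi_ne_zero
          push_cast
          field_simp
        rw [hrw]
        have habs : |(k:ℝ) * h| = (k.natAbs : ℝ) * h := by
          rw [abs_mul, abs_of_pos hpos, Nat.cast_natAbs, Int.cast_abs]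
        have hknat1 : ((2:ℝ)^n) ≤ (k.natAbs : ℝ) := by exact_mod_cast hk1
        have hknat2 : (k.natAbs : ℝ) ≤ (2:ℝ)^(n+1) := by
          have : (k.natAbs : ℝ) < (2:ℝ)^(n+1) := by exact_mod_cast hk2
          linarith
        apply bern_factor_ge
        · rw [habs]
          have : (2:ℝ)^n * h = 3*π/4 := by
            rw [hhdef]; field_simp
          nlinarith [mul_le_mul_of_nonneg_right hknat1 hpos.le]
        · rw [habs]
          have h2 : (2:ℝ)^(n+1) * h = 3*π/2 := by
            rw [hhdef]; rw [pow_succ]; field_simp; ring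
          nlinarith [mul_le_mul_of_nonneg_right hknat2 hpos.le]
      calc a k = 1 * a k := (one_mul _).symm
        _ ≤ ‖fourier (-k) ((-h : ℝ) : AddCircle (2*π)) - 1‖ * a k :=
            mul_le_mul_of_nonneg_right hfac (ha0 k)
    calc ∑ k ∈ s, a k ^ 2 ≤ ∑ k ∈ s, ‖fourierCoeff (⇑G) k‖ ^ 2 := by
          refine Finset.sum_le_sum fun k hk => ?_
          exact pow_le_pow_left₀ (ha0 k) (hdom k hk) 2
      _ ≤ ‖G‖ ^ 2 := bern_bessel_bound G s
      _ ≤ ((C : ℝ) * h ^ (α : ℝ)) ^ 2 := by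
          have : (0:ℝ) ≤ ‖G‖ := norm_nonneg _
          nlinarith
  -- step 3: Cauchy-Schwarz per block
  set b : ℕ → ℝ := fun n => Real.sqrt (2^(n+3)) * ((C : ℝ) * ((3*π/4)/2^n) ^ (α : ℝ)) with hbdef
  have hb0 : ∀ n, 0 ≤ b n := by
    intro n
    have : (0:ℝ) < (2:ℝ)^n := by positivity
    positivity
  have blocksum : ∀ (n : ℕ) (s : Finset ℤ),
      (∀ k ∈ s, 2^n ≤ k.natAbs ∧ k.natAbs < 2^(n+1)) →
      ∑ k ∈ s, a k ≤ b n := by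
    intro n s hs
    have hcard : (s.card : ℝ) ≤ 2^(n+3) := by
      have hsub : s ⊆ Finset.Icc (-(2^(n+1) : ℤ)) (2^(n+1)) := by
        intro k hk
        obtain ⟨_, hk2⟩ := hs k hk
        rw [Finset.mem_Icc]
        have : (k.natAbs : ℤ) < 2^(n+1) := by exact_mod_cast hk2
        omega
      have := Finset.card_le_card hsub
      rw [Int.card_Icc] at this
      have hc : s.card ≤ 2^(n+2) + 1 := by
        have : ((2^(n+1) : ℤ) + 1 - -(2^(n+1))).toNat = 2^(n+2) + 1 := by
          have h5 : ((2:ℤ)^(n+1) + 1 - -(2^(n+1))) = ((2^(n+2) + 1 : ℕ) : ℤ) := by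
            push_cast; ring
          rw [h5, Int.toNat_natCast]
        omega
      calc (s.card : ℝ) ≤ (2^(n+2) + 1 : ℕ) := by exact_mod_cast hc
        _ ≤ 2^(n+3) := by
          push_cast
          have : (2:ℝ)^(n+3) = 2 * 2^(n+2) := by ring
          have h1 : (1:ℝ) ≤ 2^(n+2) := one_le_pow₀ (by norm_num)
          nlinarith
    have hCS : (∑ k ∈ s, a k) ^ 2 ≤ (s.card : ℝ) * ∑ k ∈ s, a k ^ 2 := by
      have := Finset.sum_mul_sq_le_sq_mul_sq s (fun _ => (1:ℝ)) a
      simpa using this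
    have hsum2 := block n s hs
    have hRHS : (0:ℝ) ≤ (C : ℝ) * ((3*π/4)/2^n) ^ (α : ℝ) := by
      have : (0:ℝ) < (2:ℝ)^n := by positivity
      positivity
    have hfin : (∑ k ∈ s, a k) ^ 2 ≤ 2^(n+3) * ((C : ℝ) * ((3*π/4)/2^n) ^ (α : ℝ)) ^ 2 := by
      calc (∑ k ∈ s, a k) ^ 2 ≤ (s.card : ℝ) * ∑ k ∈ s, a k ^ 2 := hCS
        _ ≤ 2^(n+3) * ((C : ℝ) * ((3*π/4)/2^n) ^ (α : ℝ)) ^ 2 := by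
            have hnn : (0:ℝ) ≤ ∑ k ∈ s, a k ^ 2 :=
              Finset.sum_nonneg fun k _ => sq_nonneg _
            have hcard0 : (0:ℝ) ≤ (s.card : ℝ) := Nat.cast_nonneg _
            nlinarith
    have hsnn : 0 ≤ ∑ k ∈ s, a k := Finset.sum_nonneg fun k _ => ha0 k
    calc ∑ k ∈ s, a k = Real.sqrt ((∑ k ∈ s, a k) ^ 2) := (Real.sqrt_sq hsnn).symm
      _ ≤ Real.sqrt (2^(n+3) * ((C : ℝ) * ((3*π/4)/2^n) ^ (α : ℝ)) ^ 2) :=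
          Real.sqrt_le_sqrt hfin
      _ = Real.sqrt (2^(n+3)) * Real.sqrt (((C : ℝ) * ((3*π/4)/2^n) ^ (α : ℝ)) ^ 2) :=
          Real.sqrt_mul (by positivity) _
      _ = b n := by rw [Real.sqrt_sq hRHS]
  -- step 4: geometric bound on b
  set r : ℝ := (2:ℝ) ^ ((1:ℝ)/2 - (α : ℝ)) with hrdef
  have hr0 : 0 ≤ r := Real.rpow_nonneg (by norm_num) _
  have hr1 : r < 1 :=
    Real.rpow_lt_one_of_one_lt_of_neg one_lt_two (by linarith)
  set K : ℝ := Real.sqrt 8 * ((C : ℝ) * (3*π/4) ^ (α : ℝ)) with hKdef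
  have hbeq : ∀ n : ℕ, b n = K * r ^ n := by
    intro n
    have h2n : (0:ℝ) < (2:ℝ)^n := by positivity
    have e1 : Real.sqrt (2^(n+3)) = Real.sqrt 8 * ((2:ℝ) ^ ((n:ℝ)/2)) := by
      have : (2:ℝ)^(n+3) = 8 * 2^n := by ring
      rw [this, Real.sqrt_mul (by norm_num)]
      congr 1
      rw [Real.sqrt_eq_rpow, ← Real.rpow_natCast (2:ℝ) n, ← Real.rpow_mul (by norm_num)]
      congr 1
      ring
    have e2 : ((3*π/4)/2^n) ^ (α : ℝ)
        = (3*π/4) ^ (α : ℝ) * (2:ℝ) ^ (-((n:ℝ) * (α:ℝ))) := by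
      rw [Real.div_rpow (by positivity) h2n.le]
      rw [← Real.rpow_natCast (2:ℝ) n, ← Real.rpow_mul (by norm_num),
        div_eq_mul_inv, ← Real.rpow_neg (by norm_num)]
    have e3 : (r : ℝ) ^ n = (2:ℝ) ^ (((1:ℝ)/2 - (α:ℝ)) * (n:ℝ)) := by
      rw [hrdef, ← Real.rpow_natCast ((2:ℝ) ^ ((1:ℝ)/2 - (α:ℝ))) n,
        ← Real.rpow_mul (by norm_num)]
    rw [hbdef]
    show Real.sqrt (2^(n+3)) * ((C : ℝ) * ((3*π/4)/2^n) ^ (α : ℝ)) = K * r ^ n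
    rw [e1, e2, e3, hKdef]
    rw [show ((1:ℝ)/2 - (α:ℝ)) * (n:ℝ) = (n:ℝ)/2 + (-((n:ℝ) * (α:ℝ))) by ring,
      Real.rpow_add (by norm_num)]
    ring
  have hbsum : Summable b := by
    rw [show b = fun n => K * r ^ n from funext hbeq]
    exact (summable_geometric_of_lt_one hr0 hr1).mul_left K
  set B : ℝ := ∑' n, b n with hBdef
  -- step 5: conclusion
  apply summable_of_sum_le (c := a 0 + B) ha0
  intro u
  have hsplit : ∑ k ∈ u, a k ≤ a 0 + ∑ k ∈ u.erase 0, a k := by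
    by_cases h0 : (0:ℤ) ∈ u
    · rw [← Finset.add_sum_erase u a h0]
    · rw [Finset.erase_eq_of_notMem h0]
      have := ha0 0
      linarith
  refine hsplit.trans ?_
  have hmain : ∑ k ∈ u.erase 0, a k ≤ B := by
    set s' := u.erase 0 with hs'
    set N : ℕ := (s'.sup fun k => Nat.log 2 k.natAbs) + 1 with hN
    have hmaps : ∀ k ∈ s', (fun k : ℤ => Nat.log 2 k.natAbs) k ∈ Finset.range N := by
      intro k hk
      rw [Finset.mem_range, hN]
      exact Nat.lt_succ_of_le (Finset.le_sup (f := fun k : ℤ => Nat.log 2 k.natAbs) hk)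
    have hfib := Finset.sum_fiberwise_of_maps_to hmaps a
    rw [← hfib]
    have hfiber : ∀ n ∈ Finset.range N,
        ∑ k ∈ s'.filter (fun k => Nat.log 2 k.natAbs = n), a k ≤ b n := by
      intro n _
      apply blocksum n
      intro k hk
      rw [Finset.mem_filter] at hk
      obtain ⟨hks', hklog⟩ := hk
      have hk0 : k ≠ 0 := Finset.ne_of_mem_erase hks'
      have hknat : k.natAbs ≠ 0 := Int.natAbs_ne_zero.mpr hk0
      constructor
      · rw [← hklog]
        exact Nat.pow_log_le_self 2 hknat
      · rw [← hklog]
        exact Nat.lt_pow_succ_log_self one_lt_two k.natAbs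
    calc ∑ n ∈ Finset.range N, ∑ k ∈ s'.filter (fun k => Nat.log 2 k.natAbs = n), a k
        ≤ ∑ n ∈ Finset.range N, b n := Finset.sum_le_sum hfiber
      _ ≤ B := hbsum.sum_le_tsum _ (fun n _ => hb0 n)
  linarith
end

section
/- Suppose φ : 𝕊 → ℝ is continuous, μ > 0, sup φ < μ/2, and φ satisfies μφ - φ² = Lφ where Lφ is α-Hölder continuous with 0 < α ≤ 1. Then φ itself is α-Hölder continuous. -/
open scoped Real

theorem whitham_holder_regularity (μ : ℝ) (hμ : 0 < μ)
    (φ g : ℝ → ℝ) (hcont : Continuous φ)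
    (hper : Function.Periodic φ (2 * π))
    (hsub : ∀ x : ℝ, φ x < μ / 2)
    (heq : ∀ x : ℝ, μ * φ x - (φ x) ^ 2 = g x)
    (C α : NNReal) (hα0 : 0 < (α : ℝ)) (hα1 : (α : ℝ) ≤ 1)
    (hg : HolderWith C α g) :
    ∃ C' : NNReal, HolderWith C' α φ := by
  -- find a uniform lower bound δ for μ/2 - φ
  have h2π : (0 : ℝ) < 2 * π := by positivity
  obtain ⟨x₀, hx₀mem, hx₀max⟩ := (isCompact_Icc (a := (0:ℝ)) (b := 2 * π)).exists_isMaxOn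
    ⟨0, by constructor <;> [rfl; positivity]⟩ hcont.continuousOn
  obtain ⟨δ, hδdef⟩ : ∃ δ : ℝ, δ = μ / 2 - φ x₀ := ⟨_, rfl⟩
  have hδpos : 0 < δ := by have := hsub x₀; rw [hδdef]; linarith
  have hbound : ∀ x, δ ≤ μ / 2 - φ x := by
    intro x
    obtain ⟨y, hy, hxy⟩ := hper.exists_mem_Ico₀ h2π x
    have : φ y ≤ φ x₀ := hx₀max (Set.mem_Icc.2 ⟨hy.1, hy.2.le⟩)
    rw [hxy, hδdef]; linarith
  refine ⟨C / Real.toNNReal (2 * δ), fun x y => ?_⟩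
  -- key real inequality
  have key : dist (φ x) (φ y) * (2 * δ) ≤ dist (g x) (g y) := by
    have ha := hbound x
    have hb := hbound y
    have hsq : (μ / 2 - φ x) ^ 2 - (μ / 2 - φ y) ^ 2 = g y - g x := by
      have h1 := heq x; have h2 := heq y; ring_nf; nlinarith [heq x, heq y]
    have factored : (φ y - φ x) * ((μ / 2 - φ x) + (μ / 2 - φ y)) = g y - g x := by
      nlinarith [hsq]
    rw [Real.dist_eq, Real.dist_eq]
    have h2δ : 2 * δ ≤ (μ / 2 - φ x) + (μ / 2 - φ y) := by linarith
    calc |φ x - φ y| * (2 * δ) ≤ |φ x - φ y| * ((μ / 2 - φ x) + (μ / 2 - φ y)) := by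
          apply mul_le_mul_of_nonneg_left h2δ (abs_nonneg _)
      _ = |(φ y - φ x) * ((μ / 2 - φ x) + (μ / 2 - φ y))| := by
          rw [abs_mul, abs_of_nonneg (by linarith : (0:ℝ) ≤ (μ / 2 - φ x) + (μ / 2 - φ y)),
            abs_sub_comm]
      _ = |g x - g y| := by rw [factored, abs_sub_comm]
  have hgd : dist (g x) (g y) ≤ (C : ℝ) * dist x y ^ (α : ℝ) := hg.dist_le x y
  have hdist : dist (φ x) (φ y) ≤ ((C : ℝ) / (2 * δ)) * dist x y ^ (α : ℝ) := by
    rw [div_mul_eq_mul_div, le_div_iff₀ (by linarith)]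
    exact key.trans hgd
  -- convert to edist
  have hC' : ((C / Real.toNNReal (2 * δ) : NNReal) : ℝ) = (C : ℝ) / (2 * δ) := by
    rw [NNReal.coe_div, Real.coe_toNNReal _ (by linarith)]
  rw [edist_dist, edist_dist, ENNReal.ofReal_rpow_of_nonneg dist_nonneg hα0.le,
    ← ENNReal.ofReal_coe_nnreal, ← ENNReal.ofReal_mul (NNReal.coe_nonneg _)]
  exact ENNReal.ofReal_le_ofReal (by rw [hC']; exact hdist)
end

section
/- Suppose φ : 𝕊 → ℝ is continuous, μ > 0, φ ≤ μ/2 everywhere, φ satisfies μφ - φ² = Lφ, and Lφ is (1/2)-Hölder continuous with constant C. If φ(x₀) = μ/2 at some point x₀, then |φ(x₀) - φ(y)| ≤ sqrt(C) |x₀ - y|^{1/4} for all y; in particular φ is (1/4)-Hölder continuous at x₀. -/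
theorem whitham_quarter_holder_at_crest (μ : ℝ) (hμ : 0 < μ)
    (φ g : ℝ → ℝ) (hle : ∀ x : ℝ, φ x ≤ μ / 2)
    (heq : ∀ x : ℝ, μ * φ x - (φ x) ^ 2 = g x)
    (C : NNReal) (hg : HolderWith C (1/2 : NNReal) g)
    (x₀ : ℝ) (hx₀ : φ x₀ = μ / 2) :
    ∀ y : ℝ, |φ x₀ - φ y| ≤ Real.sqrt C * |x₀ - y| ^ (1/4 : ℝ) := by
  intro y
  have hnn : 0 ≤ φ x₀ - φ y := by
    rw [hx₀]; linarith [hle y]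
  rw [abs_of_nonneg hnn]
  have hsq : (φ x₀ - φ y) ^ 2 = g x₀ - g y := by
    rw [← heq x₀, ← heq y, hx₀]; ring
  have hdist : g x₀ - g y ≤ C * |x₀ - y| ^ (1/2 : ℝ) := by
    have := hg.dist_le x₀ y
    rw [Real.dist_eq, Real.dist_eq] at this
    calc g x₀ - g y ≤ |g x₀ - g y| := le_abs_self _
      _ ≤ C * |x₀ - y| ^ ((1/2 : NNReal) : ℝ) := this
      _ = C * |x₀ - y| ^ (1/2 : ℝ) := by norm_num
  have key : (φ x₀ - φ y) ^ 2 ≤ C * |x₀ - y| ^ (1/2 : ℝ) := hsq ▸ hdist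
  have h := Real.sqrt_le_sqrt key
  rw [Real.sqrt_sq hnn] at h
  refine h.trans (le_of_eq ?_)
  rw [Real.sqrt_mul C.coe_nonneg]
  congr 1
  rw [Real.sqrt_eq_rpow, ← Real.rpow_mul (abs_nonneg _)]
  norm_num
end

section
/- Suppose a family of continuous 2π-periodic functions φ_ε satisfies μφ_ε - φ_ε² = Lφ_ε with sup_x φ_ε(x) ≤ μ/2 - δ for a fixed δ > 0, where L maps bounded sets of C(𝕊) into bounded sets of C^{1/2}(𝕊). If the family is uniformly bounded in C(𝕊), then it is uniformly bounded in C^{1/2}(𝕊), with Hölder constant bounded by (sup_ε ‖Lφ_ε‖_{C^{1/2}})/(2δ). -/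
theorem whitham_uniform_holder_bound {ι : Type*} (μ δ B : ℝ) (hμ : 0 < μ)
    (hδ : 0 < δ) (φ g : ι → ℝ → ℝ)
    (hcont : ∀ i, Continuous (φ i))
    (hsub : ∀ i x, φ i x ≤ μ / 2 - δ)
    (heq : ∀ i x, μ * φ i x - (φ i x) ^ 2 = g i x)
    (hbd : ∀ i x, |φ i x| ≤ B)
    (M : NNReal) (hg : ∀ i, HolderWith M (1/2 : NNReal) (g i)) :
    ∀ i, HolderWith (M / (2 * Real.toNNReal δ)) (1/2 : NNReal) (φ i) := by
  intro i x y
  -- real inequality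
  have hD : 2 * δ ≤ μ - φ i x - φ i y := by
    have h1 := hsub i x; have h2 := hsub i y; linarith
  have hDpos : 0 < μ - φ i x - φ i y := lt_of_lt_of_le (by linarith) hD
  have hkey : (μ - φ i x - φ i y) * (φ i x - φ i y) = g i x - g i y := by
    rw [← heq i x, ← heq i y]; ring
  have habs : |φ i x - φ i y| ≤ |g i x - g i y| / (2 * δ) := by
    rw [div_eq_inv_mul, ← hkey, abs_mul, abs_of_pos hDpos]
    rw [← mul_assoc]
    have h2δ : (0:ℝ) < 2 * δ := by linarith
    have : (1:ℝ) ≤ (2*δ)⁻¹ * (μ - φ i x - φ i y) := by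
      rw [inv_mul_eq_div, le_div_iff₀ h2δ]; linarith
    nlinarith [abs_nonneg (φ i x - φ i y)]
  have hgd : |g i x - g i y| ≤ M * dist x y ^ ((1:ℝ)/2) := by
    have := (hg i).dist_le x y
    simpa [Real.dist_eq, NNReal.coe_div] using this
  have hreal : dist (φ i x) (φ i y) ≤
      ((M / (2 * Real.toNNReal δ) : NNReal) : ℝ) * dist x y ^ ((1:ℝ)/2) := by
    rw [Real.dist_eq]
    have h2δ : (0:ℝ) < 2 * δ := by linarith
    have hc : ((M / (2 * Real.toNNReal δ) : NNReal) : ℝ) = (M : ℝ) / (2 * δ) := by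
      push_cast [Real.coe_toNNReal δ hδ.le]
      ring
    rw [hc, div_mul_eq_mul_div]
    calc |φ i x - φ i y| ≤ |g i x - g i y| / (2 * δ) := habs
      _ ≤ (M : ℝ) * dist x y ^ ((1:ℝ)/2) / (2 * δ) := by
          gcongr
  -- convert to edist
  rw [edist_dist, edist_dist]
  calc ENNReal.ofReal (dist (φ i x) (φ i y))
      ≤ ENNReal.ofReal (((M / (2 * Real.toNNReal δ) : NNReal) : ℝ) * dist x y ^ ((1:ℝ)/2)) :=
        ENNReal.ofReal_le_ofReal hreal
    _ = (M / (2 * Real.toNNReal δ) : NNReal) * ENNReal.ofReal (dist x y) ^ ((1/2 : NNReal) : ℝ) := by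
        rw [ENNReal.ofReal_mul (by positivity), ENNReal.ofReal_coe_nnreal,
          ← ENNReal.ofReal_rpow_of_nonneg dist_nonneg (by norm_num)]
        norm_num
end
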